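/- arXiv:1607.00473 — 3 statements merged into one kernel-verified Lean document; each statement's English description precedes it below -/
import Mathlib

section
/- Let n ≥ 4 and a be integers with 1 ≤ a ≤ n/2. Then the distance signless Laplacian spread of complete bipartite graphs satisfies S_𝒬(K_{a,n−a}) ≥ S_𝒬(K_{⌊n/2⌋,⌈n/2⌉}), with equality if and only if a = ⌊n/2⌋. -/
open Finset Matrix

noncomputable def distMatrix {V : Type*} [Fintype V] (G : SimpleGraph V) : Matrix V V ℝ :=
  Matrix.of fun u v => (G.dist u v : ℝ)

theorem distMatrix_isHermitian {V : Type*} [Fintype V] (G : SimpleGraph V) :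
    (distMatrix G).IsHermitian := by
  show (distMatrix G)ᴴ = distMatrix G
  ext i j
  simp [distMatrix, Matrix.conjTranspose_apply, SimpleGraph.dist_comm]

noncomputable def transmission {V : Type*} [Fintype V] (G : SimpleGraph V) (v : V) : ℝ :=
  ∑ u, (G.dist v u : ℝ)

noncomputable def distSLMatrix {V : Type*} [Fintype V] [DecidableEq V] (G : SimpleGraph V) :
    Matrix V V ℝ :=
  Matrix.diagonal (transmission G) + distMatrix G

theorem distSLMatrix_isHermitian {V : Type*} [Fintype V] [DecidableEq V] (G : SimpleGraph V) :
    (distSLMatrix G).IsHermitian :=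
  (Matrix.isHermitian_diagonal _).add (distMatrix_isHermitian G)

noncomputable def maxEig {V : Type*} [Fintype V] [DecidableEq V] {A : Matrix V V ℝ}
    (hA : A.IsHermitian) : ℝ :=
  ⨆ i, hA.eigenvalues i

noncomputable def minEig {V : Type*} [Fintype V] [DecidableEq V] {A : Matrix V V ℝ}
    (hA : A.IsHermitian) : ℝ :=
  ⨅ i, hA.eigenvalues i

noncomputable def distSpread {V : Type*} [Fintype V] [DecidableEq V] (G : SimpleGraph V) : ℝ :=
  maxEig (distMatrix_isHermitian G) - minEig (distMatrix_isHermitian G)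

noncomputable def distSLSpread {V : Type*} [Fintype V] [DecidableEq V] (G : SimpleGraph V) : ℝ :=
  maxEig (distSLMatrix_isHermitian G) - minEig (distSLMatrix_isHermitian G)

/-! ### Auxiliary material -/

section Blk

/-- A block matrix with constant blocks plus scalar diagonals. -/
def blk (a b : ℕ) (p q r s t u : ℝ) : Matrix (Fin a ⊕ Fin b) (Fin a ⊕ Fin b) ℝ :=
  Matrix.of fun x y =>
    match x, y with
    | .inl i, .inl j => p + (if i = j then q else 0)
    | .inl _, .inr _ => r
    | .inr _, .inl _ => s
    | .inr i, .inr j => t + (if i = j then u else 0)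

lemma blk_mul (a b : ℕ) (p q r s t u p' q' r' s' t' u' : ℝ) :
    blk a b p q r s t u * blk a b p' q' r' s' t' u' =
    blk a b (a*p*p' + p*q' + q*p' + b*r*s') (q*q')
      (a*p*r' + q*r' + b*r*t' + r*u')
      (a*s*p' + s*q' + b*t*s' + u*s')
      (a*s*r' + b*t*t' + t*u' + u*t') (u*u') := by
  ext x y
  cases x <;> cases y <;>
    simp [blk, Matrix.mul_apply, Fintype.sum_sum_type, Finset.sum_add_distrib,
      add_mul, mul_add, mul_ite, ite_mul, Finset.sum_ite_eq, Finset.sum_ite_eq',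
      Finset.sum_const, mul_comm, mul_assoc, mul_left_comm] <;> ring_nf

lemma blk_one (a b : ℕ) : (1 : Matrix (Fin a ⊕ Fin b) (Fin a ⊕ Fin b) ℝ) =
    blk a b 0 1 0 0 0 1 := by
  ext x y
  cases x <;> cases y <;> simp [blk, Matrix.one_apply, Sum.inl.injEq, Sum.inr.injEq]

lemma blk_smul (a b : ℕ) (c p q r s t u : ℝ) :
    c • blk a b p q r s t u = blk a b (c*p) (c*q) (c*r) (c*s) (c*t) (c*u) := by
  ext x y
  cases x <;> cases y <;> simp only [blk, Matrix.smul_apply, Matrix.of_apply, smul_eq_mul] <;>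
    (try split) <;> ring

lemma blk_sub (a b : ℕ) (p q r s t u p' q' r' s' t' u' : ℝ) :
    blk a b p q r s t u - blk a b p' q' r' s' t' u' =
    blk a b (p-p') (q-q') (r-r') (s-s') (t-t') (u-u') := by
  ext x y
  cases x <;> cases y <;> simp only [blk, Matrix.sub_apply, Matrix.of_apply] <;>
    (try split) <;> ring

lemma blk_add (a b : ℕ) (p q r s t u p' q' r' s' t' u' : ℝ) :
    blk a b p q r s t u + blk a b p' q' r' s' t' u' =
    blk a b (p+p') (q+q') (r+r') (s+s') (t+t') (u+u') := by
  ext x y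
  cases x <;> cases y <;> simp only [blk, Matrix.add_apply, Matrix.of_apply] <;>
    (try split) <;> ring

lemma blk_zero (a b : ℕ) (p q r s t u : ℝ) (h1 : p = 0) (h2 : q = 0) (h3 : r = 0)
    (h4 : s = 0) (h5 : t = 0) (h6 : u = 0) :
    blk a b p q r s t u = 0 := by
  subst h1 h2 h3 h4 h5 h6
  ext x y
  cases x <;> cases y <;> simp [blk]

lemma blk_zero_one (b : ℕ) (p q r s t u : ℝ) (h1 : p + q = 0) (h3 : r = 0)
    (h4 : s = 0) (h5 : t = 0) (h6 : u = 0) :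
    blk 1 b p q r s t u = 0 := by
  subst h3 h4 h5 h6
  ext x y
  cases x with
  | inl i => cases y with
    | inl j =>
      rw [show i = j from Subsingleton.elim i j]
      simp [blk]
      linarith
    | inr j => simp [blk]
  | inr i => cases y with
    | inl j => simp [blk]
    | inr j => simp [blk]

lemma blk_mulVec_elim (a b : ℕ) (p q r s t u c₁ c₂ : ℝ) :
    blk a b p q r s t u *ᵥ Sum.elim (fun _ => c₁) (fun _ => c₂) =
    Sum.elim (fun _ => (a*p+q)*c₁ + b*r*c₂) (fun _ => a*s*c₁ + (b*t+u)*c₂) := by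
  ext x
  cases x <;>
    simp [blk, Matrix.mulVec, dotProduct, Fintype.sum_sum_type,
      Finset.sum_add_distrib, add_mul, ite_mul, Finset.sum_ite_eq, Finset.sum_ite_eq',
      Finset.sum_const] <;> ring

def dvec (a b : ℕ) (i0 i1 : Fin a) : (Fin a ⊕ Fin b) → ℝ :=
  Sum.elim (fun i => (if i = i0 then (1:ℝ) else 0) - (if i = i1 then 1 else 0)) (fun _ => 0)

lemma blk_mulVec_dvec (a b : ℕ) (p q r s t u : ℝ) (i0 i1 : Fin a) :
    blk a b p q r s t u *ᵥ dvec a b i0 i1 = q • dvec a b i0 i1 := by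
  ext x
  cases x with
  | inl i =>
    simp [blk, dvec, Matrix.mulVec, dotProduct, Fintype.sum_sum_type, mul_sub,
      Finset.sum_sub_distrib, Finset.sum_add_distrib, add_mul, mul_ite, ite_mul,
      Finset.sum_ite_eq, Finset.sum_ite_eq', Finset.sum_const]
  | inr i =>
    simp [blk, dvec, Matrix.mulVec, dotProduct, Fintype.sum_sum_type, mul_sub,
      Finset.sum_sub_distrib, Finset.sum_ite_eq, Finset.sum_ite_eq', Finset.sum_const]

end Blk

section EigTools

variable {V : Type*} [Fintype V] [DecidableEq V] {A : Matrix V V ℝ}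

lemma exists_eig_of_mulVec (hA : A.IsHermitian) {μ : ℝ} {v : V → ℝ} (hv : v ≠ 0)
    (hAv : A *ᵥ v = μ • v) : ∃ i, hA.eigenvalues i = μ := by
  classical
  set U : Matrix V V ℝ := (hA.eigenvectorUnitary : Matrix V V ℝ) with hU
  have hUU : U * star U = 1 := (Matrix.mem_unitaryGroup_iff).mp hA.eigenvectorUnitary.2
  have hUU' : star U * U = 1 := (Matrix.mem_unitaryGroup_iff').mp hA.eigenvectorUnitary.2
  set w : V → ℝ := star U *ᵥ v with hw
  have hwne : w ≠ 0 := by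
    intro h0
    apply hv
    have : U *ᵥ w = v := by
      rw [hw, Matrix.mulVec_mulVec, hUU, Matrix.one_mulVec]
    rw [h0, Matrix.mulVec_zero] at this
    exact this.symm
  have hdiag : Matrix.diagonal (RCLike.ofReal ∘ hA.eigenvalues) *ᵥ w = μ • w := by
    have h1 : star U *ᵥ (A *ᵥ v) = μ • w := by
      rw [hAv, Matrix.mulVec_smul, hw]
    have h2 : star U * A = Matrix.diagonal (RCLike.ofReal ∘ hA.eigenvalues) * star U := by
      conv_lhs => rw [hA.spectral_theorem, Unitary.conjStarAlgAut_apply]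
      rw [← hU, ← Matrix.mul_assoc, ← Matrix.mul_assoc, hUU', Matrix.one_mul]
    rw [Matrix.mulVec_mulVec, h2, ← Matrix.mulVec_mulVec, ← hw] at h1
    exact h1
  obtain ⟨i, hi⟩ := Function.ne_iff.mp hwne
  refine ⟨i, ?_⟩
  have := congrFun hdiag i
  simp only [Matrix.mulVec_diagonal, Pi.smul_apply, smul_eq_mul, Function.comp_apply,
    RCLike.ofReal_real_eq_id, id_eq] at this
  exact mul_right_cancel₀ hi this

lemma mulVec_sub_smul_one {v : V → ℝ} {μ c : ℝ} (h : A *ᵥ v = μ • v) :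
    (A - c • (1 : Matrix V V ℝ)) *ᵥ v = (μ - c) • v := by
  rw [Matrix.sub_mulVec, h, Matrix.smul_mulVec, Matrix.one_mulVec, sub_smul]

lemma eig_root4 (hA : A.IsHermitian) (c₁ c₂ c₃ c₄ : ℝ)
    (h : (A - c₁ • 1) * ((A - c₂ • 1) * ((A - c₃ • 1) * (A - c₄ • 1))) = 0) (i : V) :
    hA.eigenvalues i = c₁ ∨ hA.eigenvalues i = c₂ ∨ hA.eigenvalues i = c₃ ∨
      hA.eigenvalues i = c₄ := by
  set μ := hA.eigenvalues i with hμ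
  set v : V → ℝ := ⇑(hA.eigenvectorBasis i) with hv
  have hvne : v ≠ 0 := by
    intro h; apply hA.eigenvectorBasis.orthonormal.ne_zero i; ext j; simpa [hv] using congrFun h j
  have hAv : A *ᵥ v = μ • v := hA.mulVec_eigenvectorBasis i
  have e4 : (A - c₄ • 1) *ᵥ v = (μ - c₄) • v := mulVec_sub_smul_one hAv
  have e3 : ((A - c₃ • 1) * (A - c₄ • 1)) *ᵥ v = ((μ - c₃) * (μ - c₄)) • v := by
    rw [← Matrix.mulVec_mulVec, e4, Matrix.mulVec_smul, mulVec_sub_smul_one hAv, smul_smul,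
      mul_comm]
  have e2 : ((A - c₂ • 1) * ((A - c₃ • 1) * (A - c₄ • 1))) *ᵥ v =
      ((μ - c₂) * ((μ - c₃) * (μ - c₄))) • v := by
    rw [← Matrix.mulVec_mulVec, e3, Matrix.mulVec_smul, mulVec_sub_smul_one hAv, smul_smul,
      mul_comm]
  have e1 : ((μ - c₁) * ((μ - c₂) * ((μ - c₃) * (μ - c₄)))) • v = 0 := by
    rw [mul_comm, ← smul_smul, ← mulVec_sub_smul_one hAv, ← Matrix.mulVec_smul, ← e2,
      Matrix.mulVec_mulVec, h, Matrix.zero_mulVec]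
  have := (smul_eq_zero.mp e1).resolve_right hvne
  rcases mul_eq_zero.mp this with h1 | h1
  · exact Or.inl (by linarith [sub_eq_zero.mp h1])
  rcases mul_eq_zero.mp h1 with h2 | h2
  · exact Or.inr (Or.inl (by linarith [sub_eq_zero.mp h2]))
  rcases mul_eq_zero.mp h2 with h3 | h3
  · exact Or.inr (Or.inr (Or.inl (by linarith [sub_eq_zero.mp h3])))
  · exact Or.inr (Or.inr (Or.inr (by linarith [sub_eq_zero.mp h3])))

lemma maxEig_eq_of [Nonempty V] (hA : A.IsHermitian) {μ : ℝ}
    (h1 : ∀ i, hA.eigenvalues i ≤ μ) (h2 : ∃ i, hA.eigenvalues i = μ) : maxEig hA = μ := by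
  obtain ⟨i, hi⟩ := h2
  exact le_antisymm (ciSup_le h1)
    (hi ▸ le_ciSup (Set.Finite.bddAbove (Set.finite_range _)) i)

lemma minEig_eq_of [Nonempty V] (hA : A.IsHermitian) {μ : ℝ}
    (h1 : ∀ i, μ ≤ hA.eigenvalues i) (h2 : ∃ i, hA.eigenvalues i = μ) : minEig hA = μ := by
  obtain ⟨i, hi⟩ := h2
  exact le_antisymm (hi ▸ ciInf_le (Set.Finite.bddBelow (Set.finite_range _)) i)
    (le_ciInf h1)

lemma quad_factor (M : Matrix V V ℝ) (x y : ℝ) :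
    (M - x • 1) * (M - y • 1) = M * M - (x + y) • M + (x * y) • (1 : Matrix V V ℝ) := by
  rw [Matrix.sub_mul, Matrix.mul_sub, Matrix.mul_sub]
  simp only [Matrix.smul_mul, Matrix.mul_smul, Matrix.one_mul, Matrix.mul_one, smul_smul]
  rw [mul_comm y x, add_smul]
  abel

end EigTools

section Kab

abbrev Kg (a b : ℕ) := completeBipartiteGraph (Fin a) (Fin b)

variable {a b : ℕ} (ha : 1 ≤ a) (hb : 1 ≤ b)

lemma adj_lr (i : Fin a) (j : Fin b) : (Kg a b).Adj (.inl i) (.inr j) := by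
  simp [completeBipartiteGraph]

lemma dist_lr (i : Fin a) (j : Fin b) : (Kg a b).dist (.inl i) (.inr j) = 1 :=
  SimpleGraph.dist_eq_one_iff_adj.2 (adj_lr i j)

include hb in
lemma dist_ll {i j : Fin a} (hij : i ≠ j) : (Kg a b).dist (.inl i) (.inl j) = 2 := by
  have h2 : (Kg a b).dist (.inl i) (.inl j) ≤ 2 := by
    simpa using SimpleGraph.dist_le
      (.cons (adj_lr i ⟨0, hb⟩) (.cons ((Kg a b).adj_symm (adj_lr j ⟨0, hb⟩)) .nil))
  have h0 : 0 < (Kg a b).dist (.inl i) (.inl j) :=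
    (SimpleGraph.Walk.reachable
      (.cons (adj_lr i ⟨0, hb⟩) (.cons ((Kg a b).adj_symm (adj_lr j ⟨0, hb⟩)) .nil))).pos_dist_of_ne
      (by simpa using hij)
  have h1 : (Kg a b).dist (.inl i) (.inl j) ≠ 1 := by
    intro h
    have := SimpleGraph.dist_eq_one_iff_adj.mp h
    simp [completeBipartiteGraph] at this
  omega

include ha in
lemma dist_rr {i j : Fin b} (hij : i ≠ j) : (Kg a b).dist (.inr i) (.inr j) = 2 := by
  have h2 : (Kg a b).dist (.inr i) (.inr j) ≤ 2 := by
    simpa using SimpleGraph.dist_le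
      (.cons ((Kg a b).adj_symm (adj_lr ⟨0, ha⟩ i)) (.cons (adj_lr ⟨0, ha⟩ j) .nil))
  have h0 : 0 < (Kg a b).dist (.inr i) (.inr j) :=
    (SimpleGraph.Walk.reachable
      (.cons ((Kg a b).adj_symm (adj_lr ⟨0, ha⟩ i)) (.cons (adj_lr ⟨0, ha⟩ j) .nil))).pos_dist_of_ne
      (by simpa using hij)
  have h1 : (Kg a b).dist (.inr i) (.inr j) ≠ 1 := by
    intro h
    have := SimpleGraph.dist_eq_one_iff_adj.mp h
    simp [completeBipartiteGraph] at this
  omega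

include ha hb in
lemma Q_eq_blk : distSLMatrix (Kg a b) =
    blk a b 2 ((a:ℝ)+b+a-4) 1 1 2 ((a:ℝ)+b+b-4) := by
  have trL : ∀ i : Fin a, transmission (Kg a b) (.inl i) = 2*(a:ℝ) + b - 2 := by
    intro i
    have : ∀ j : Fin a, ((Kg a b).dist (.inl i) (.inl j) : ℝ) =
        2 - (if i = j then 2 else 0) := by
      intro j
      by_cases h : i = j
      · simp [h]
      · simp [h, dist_ll hb h]
    simp only [transmission, Fintype.sum_sum_type]
    rw [Finset.sum_congr rfl (fun j _ => this j)]
    simp [Finset.sum_sub_distrib, dist_lr, Finset.sum_ite_eq]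
    ring
  have trR : ∀ i : Fin b, transmission (Kg a b) (.inr i) = 2*(b:ℝ) + a - 2 := by
    intro i
    have : ∀ j : Fin b, ((Kg a b).dist (.inr i) (.inr j) : ℝ) =
        2 - (if i = j then 2 else 0) := by
      intro j
      by_cases h : i = j
      · simp [h]
      · simp [h, dist_rr ha h]
    simp only [transmission, Fintype.sum_sum_type]
    rw [Finset.sum_congr rfl (fun j _ => this j)]
    have : ∀ j : Fin a, ((Kg a b).dist (.inr i) (.inl j) : ℝ) = 1 := by
      intro j; rw [SimpleGraph.dist_comm, dist_lr]; norm_num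
    rw [Finset.sum_congr rfl (fun j _ => this j)]
    simp [Finset.sum_sub_distrib, Finset.sum_ite_eq]
    ring
  ext x y
  cases x with
  | inl i => cases y with
    | inl j =>
      by_cases h : i = j
      · subst h
        simp [distSLMatrix, blk, distMatrix, Matrix.diagonal, trL i, SimpleGraph.dist_self]
        ring
      · simp [distSLMatrix, blk, distMatrix, Matrix.diagonal, h, dist_ll hb h]
    | inr j => simp [distSLMatrix, blk, distMatrix, Matrix.diagonal, dist_lr]
  | inr i => cases y with
    | inl j =>
      simp [distSLMatrix, blk, distMatrix, Matrix.diagonal,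
        SimpleGraph.dist_comm (u := Sum.inr i), dist_lr]
    | inr j =>
      by_cases h : i = j
      · subst h
        simp [distSLMatrix, blk, distMatrix, Matrix.diagonal, trR i, SimpleGraph.dist_self]
        ring
      · simp [distSLMatrix, blk, distMatrix, Matrix.diagonal, h, dist_rr ha h]

noncomputable def Qb (a b : ℕ) : Matrix (Fin a ⊕ Fin b) (Fin a ⊕ Fin b) ℝ :=
  blk a b 2 ((a:ℝ)+b+a-4) 1 1 2 ((a:ℝ)+b+b-4)

lemma quartic_ident (a b : ℕ) :
    (Qb a b - ((a:ℝ)+b+a-4) • 1) * ((Qb a b - ((a:ℝ)+b+b-4) • 1) *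
      (Qb a b * Qb a b - (5*((a:ℝ)+b)-8) • Qb a b +
        ((((a:ℝ)+b)+3*a-4)*(((a:ℝ)+b)+3*b-4) - (a:ℝ)*b) •
          (1 : Matrix (Fin a ⊕ Fin b) (Fin a ⊕ Fin b) ℝ))) = 0 := by
  rw [Qb]
  simp only [blk_one, blk_smul, blk_mul, blk_sub, blk_add]
  apply blk_zero <;> ring

lemma cubic_ident (b : ℕ) :
    ((Qb 1 b - ((1:ℝ)+b+b-4) • 1) *
      (Qb 1 b * Qb 1 b - (5*((1:ℝ)+b)-8) • Qb 1 b +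
        ((((1:ℝ)+b)+3*1-4)*(((1:ℝ)+b)+3*b-4) - (1:ℝ)*b) •
          (1 : Matrix (Fin 1 ⊕ Fin b) (Fin 1 ⊕ Fin b) ℝ))) = 0 := by
  rw [Qb]
  simp only [blk_one, blk_smul, blk_mul, blk_sub, blk_add]
  apply blk_zero_one <;> push_cast <;> ring

end Kab

section SpreadFormulas

lemma spread_ab (a b : ℕ) (h2 : 2 ≤ a) (hab : a ≤ b) :
    distSLSpread (completeBipartiteGraph (Fin a) (Fin b)) =
      (3*((a:ℝ)+b) - 2*a + Real.sqrt (9*((b:ℝ)-a)^2 + 4*a*b)) / 2 := by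
  have ha : 1 ≤ a := le_trans (by norm_num) h2
  have hb : 1 ≤ b := le_trans ha hab
  haveI : Nonempty (Fin a ⊕ Fin b) := ⟨Sum.inl ⟨0, ha⟩⟩
  have hA2 : (2:ℝ) ≤ (a:ℝ) := by exact_mod_cast h2
  have hAB : (a:ℝ) ≤ (b:ℝ) := by exact_mod_cast hab
  have hDa0 : (0:ℝ) ≤ 9*((b:ℝ)-a)^2 + 4*a*b := by positivity
  set s := Real.sqrt (9*((b:ℝ)-a)^2 + 4*a*b) with hs_def
  have hs0 : 0 ≤ s := Real.sqrt_nonneg _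
  have hs2 : s^2 = 9*((b:ℝ)-a)^2 + 4*a*b := Real.sq_sqrt hDa0
  have hQ : distSLMatrix (completeBipartiteGraph (Fin a) (Fin b)) = Qb a b := Q_eq_blk ha hb
  set r₁ : ℝ := ((5*((a:ℝ)+b)-8) + s)/2 with hr1
  set r₂ : ℝ := ((5*((a:ℝ)+b)-8) - s)/2 with hr2
  have hfac : (Qb a b - r₁ • 1) * (Qb a b - r₂ • 1) =
      Qb a b * Qb a b - (5*((a:ℝ)+b)-8) • Qb a b +
        ((((a:ℝ)+b)+3*a-4)*(((a:ℝ)+b)+3*b-4) - (a:ℝ)*b) • 1 := by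
    rw [quad_factor]
    rw [show r₁ + r₂ = 5*((a:ℝ)+b)-8 by rw [hr1, hr2]; ring]
    rw [show r₁ * r₂ = (((a:ℝ)+b)+3*a-4)*(((a:ℝ)+b)+3*b-4) - (a:ℝ)*b by
      rw [hr1, hr2]; linear_combination (-(1:ℝ)/4) * hs2]
  have h0 : (distSLMatrix (completeBipartiteGraph (Fin a) (Fin b)) - ((a:ℝ)+b+a-4) • 1) *
      ((distSLMatrix (completeBipartiteGraph (Fin a) (Fin b)) - ((a:ℝ)+b+b-4) • 1) *
      ((distSLMatrix (completeBipartiteGraph (Fin a) (Fin b)) - r₁ • 1) *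
       (distSLMatrix (completeBipartiteGraph (Fin a) (Fin b)) - r₂ • 1))) = 0 := by
    rw [hQ, hfac]
    exact quartic_ident a b
  have hH := distSLMatrix_isHermitian (completeBipartiteGraph (Fin a) (Fin b))
  have hub : ∀ i, hH.eigenvalues i ≤ r₁ := by
    intro i
    rcases eig_root4 hH _ _ _ _ h0 i with h|h|h|h <;> rw [h]
    · rw [hr1]; nlinarith [hs0, hA2, hAB]
    · rw [hr1]; nlinarith [hs0, hA2, hAB]
    · rw [hr2, hr1]; linarith
  have hsle : s ≤ (a:ℝ) + 3*b := by
    rw [hs_def]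
    calc Real.sqrt (9*((b:ℝ)-a)^2 + 4*a*b) ≤ Real.sqrt (((a:ℝ)+3*b)^2) :=
          Real.sqrt_le_sqrt (by nlinarith [hA2, hAB])
    _ = (a:ℝ)+3*b := Real.sqrt_sq (by positivity)
  have hlb : ∀ i, ((a:ℝ)+b+a-4) ≤ hH.eigenvalues i := by
    intro i
    rcases eig_root4 hH _ _ _ _ h0 i with h|h|h|h <;> rw [h]
    · linarith
    · rw [hr1]; linarith [hs0]
    · rw [hr2]; linarith [hsle]
  have hvec : distSLMatrix (completeBipartiteGraph (Fin a) (Fin b)) *ᵥ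
      Sum.elim (fun _ => (b:ℝ)) (fun _ => r₁ - ((a:ℝ)+b+3*a-4)) =
      r₁ • Sum.elim (fun _ => (b:ℝ)) (fun _ => r₁ - ((a:ℝ)+b+3*a-4)) := by
    rw [hQ, Qb, blk_mulVec_elim]
    funext x
    cases x with
    | inl i =>
      simp only [Sum.elim_inl, Pi.smul_apply, smul_eq_mul]
      ring
    | inr i =>
      simp only [Sum.elim_inr, Pi.smul_apply, smul_eq_mul]
      rw [hr1]
      linear_combination (-(1:ℝ)/4) * hs2
  have hvne : (Sum.elim (fun _ => (b:ℝ)) (fun _ => r₁ - ((a:ℝ)+b+3*a-4)) :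
      (Fin a ⊕ Fin b) → ℝ) ≠ 0 := by
    intro h
    have := congrFun h (Sum.inl ⟨0, ha⟩)
    simp only [Sum.elim_inl, Pi.zero_apply] at this
    have hb' : (0:ℝ) < b := by exact_mod_cast hb
    linarith
  have hmax : maxEig hH = r₁ :=
    maxEig_eq_of hH hub (exists_eig_of_mulVec hH hvne hvec)
  have hdvec : distSLMatrix (completeBipartiteGraph (Fin a) (Fin b)) *ᵥ
      dvec a b ⟨0, by omega⟩ ⟨1, by omega⟩ =
      ((a:ℝ)+b+a-4) • dvec a b ⟨0, by omega⟩ ⟨1, by omega⟩ := by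
    rw [hQ, Qb]
    exact blk_mulVec_dvec a b _ _ _ _ _ _ _ _
  have hdne : (dvec a b ⟨0, by omega⟩ ⟨1, by omega⟩ : (Fin a ⊕ Fin b) → ℝ) ≠ 0 := by
    intro h
    have := congrFun h (Sum.inl ⟨0, by omega⟩)
    simp [dvec, Fin.ext_iff] at this
  have hmin : minEig hH = ((a:ℝ)+b+a-4) :=
    minEig_eq_of hH hlb (exists_eig_of_mulVec hH hdne hdvec)
  show maxEig _ - minEig _ = _
  rw [hmax, hmin, hr1]
  ring

lemma spread_1b (b : ℕ) (hb3 : 3 ≤ b) :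
    distSLSpread (completeBipartiteGraph (Fin 1) (Fin b)) =
      Real.sqrt (9*((b:ℝ)-1)^2 + 4*b) := by
  have hb : 1 ≤ b := by omega
  haveI : Nonempty (Fin 1 ⊕ Fin b) := ⟨Sum.inl 0⟩
  have hB3 : (3:ℝ) ≤ (b:ℝ) := by exact_mod_cast hb3
  have hDa0 : (0:ℝ) ≤ 9*((b:ℝ)-1)^2 + 4*b := by positivity
  set s := Real.sqrt (9*((b:ℝ)-1)^2 + 4*b) with hs_def
  have hs0 : 0 ≤ s := Real.sqrt_nonneg _
  have hs2 : s^2 = 9*((b:ℝ)-1)^2 + 4*b := Real.sq_sqrt hDa0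
  have hQ : distSLMatrix (completeBipartiteGraph (Fin 1) (Fin b)) = Qb 1 b :=
    Q_eq_blk le_rfl hb
  set r₁ : ℝ := ((5*((1:ℝ)+b)-8) + s)/2 with hr1
  set r₂ : ℝ := ((5*((1:ℝ)+b)-8) - s)/2 with hr2
  have hcast1 : ((1:ℕ):ℝ) = (1:ℝ) := by norm_num
  have hfac : (Qb 1 b - r₁ • 1) * (Qb 1 b - r₂ • 1) =
      Qb 1 b * Qb 1 b - (5*((1:ℝ)+b)-8) • Qb 1 b +
        ((((1:ℝ)+b)+3*1-4)*(((1:ℝ)+b)+3*b-4) - (1:ℝ)*b) • 1 := by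
    rw [quad_factor]
    rw [show r₁ + r₂ = 5*((1:ℝ)+b)-8 by rw [hr1, hr2]; ring]
    rw [show r₁ * r₂ = (((1:ℝ)+b)+3*1-4)*(((1:ℝ)+b)+3*b-4) - (1:ℝ)*b by
      rw [hr1, hr2]; linear_combination (-(1:ℝ)/4) * hs2]
  have h0 : (distSLMatrix (completeBipartiteGraph (Fin 1) (Fin b)) - ((1:ℝ)+b+b-4) • 1) *
      ((distSLMatrix (completeBipartiteGraph (Fin 1) (Fin b)) - ((1:ℝ)+b+b-4) • 1) *
      ((distSLMatrix (completeBipartiteGraph (Fin 1) (Fin b)) - r₁ • 1) *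
       (distSLMatrix (completeBipartiteGraph (Fin 1) (Fin b)) - r₂ • 1))) = 0 := by
    have hc : (distSLMatrix (completeBipartiteGraph (Fin 1) (Fin b)) - ((1:ℝ)+b+b-4) • 1) *
        ((distSLMatrix (completeBipartiteGraph (Fin 1) (Fin b)) - r₁ • 1) *
         (distSLMatrix (completeBipartiteGraph (Fin 1) (Fin b)) - r₂ • 1)) = 0 := by
      rw [hQ, hfac]
      exact cubic_ident b
    calc (distSLMatrix (completeBipartiteGraph (Fin 1) (Fin b)) - ((1:ℝ)+b+b-4) • 1) *
        ((distSLMatrix (completeBipartiteGraph (Fin 1) (Fin b)) - ((1:ℝ)+b+b-4) • 1) *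
        ((distSLMatrix (completeBipartiteGraph (Fin 1) (Fin b)) - r₁ • 1) *
         (distSLMatrix (completeBipartiteGraph (Fin 1) (Fin b)) - r₂ • 1))) =
        (distSLMatrix (completeBipartiteGraph (Fin 1) (Fin b)) - ((1:ℝ)+b+b-4) • 1) * 0 := by
          rw [hc]
      _ = 0 := Matrix.mul_zero _
  have hH := distSLMatrix_isHermitian (completeBipartiteGraph (Fin 1) (Fin b))
  have hsge : (b:ℝ) + 3 ≤ s := by
    rw [hs_def, Real.le_sqrt (by positivity) hDa0]
    nlinarith [hB3]
  have hub : ∀ i, hH.eigenvalues i ≤ r₁ := by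
    intro i
    rcases eig_root4 hH _ _ _ _ h0 i with h|h|h|h <;> rw [h]
    · rw [hr1]; nlinarith [hs0, hB3]
    · rw [hr1]; nlinarith [hs0, hB3]
    · rw [hr2, hr1]; linarith
  have hlb : ∀ i, r₂ ≤ hH.eigenvalues i := by
    intro i
    rcases eig_root4 hH _ _ _ _ h0 i with h|h|h|h <;> rw [h]
    · rw [hr2]; linarith [hsge]
    · rw [hr2]; linarith [hsge]
    · rw [hr2, hr1]; linarith [hs0]
  have hvec : ∀ r : ℝ, r^2 - (5*((1:ℝ)+b)-8)*r +
      ((((1:ℝ)+b)+3*1-4)*(((1:ℝ)+b)+3*b-4) - (1:ℝ)*b) = 0 →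
      distSLMatrix (completeBipartiteGraph (Fin 1) (Fin b)) *ᵥ
        Sum.elim (fun _ => (b:ℝ)) (fun _ => r - ((1:ℝ)+b+3*1-4)) =
      r • Sum.elim (fun _ => (b:ℝ)) (fun _ => r - ((1:ℝ)+b+3*1-4)) := by
    intro r hr
    rw [hQ, Qb, blk_mulVec_elim]
    funext x
    cases x with
    | inl i =>
      simp only [Sum.elim_inl, Pi.smul_apply, smul_eq_mul]
      push_cast
      ring
    | inr i =>
      simp only [Sum.elim_inr, Pi.smul_apply, smul_eq_mul]
      push_cast
      linear_combination (-1:ℝ) * hr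
  have hvne : ∀ r : ℝ, (Sum.elim (fun _ => (b:ℝ)) (fun _ => r - ((1:ℝ)+b+3*1-4)) :
      (Fin 1 ⊕ Fin b) → ℝ) ≠ 0 := by
    intro r h
    have := congrFun h (Sum.inl 0)
    simp only [Sum.elim_inl, Pi.zero_apply] at this
    have hb' : (0:ℝ) < b := by exact_mod_cast hb
    linarith
  have hroot1 : r₁^2 - (5*((1:ℝ)+b)-8)*r₁ +
      ((((1:ℝ)+b)+3*1-4)*(((1:ℝ)+b)+3*b-4) - (1:ℝ)*b) = 0 := by
    rw [hr1]; linear_combination ((1:ℝ)/4) * hs2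
  have hroot2 : r₂^2 - (5*((1:ℝ)+b)-8)*r₂ +
      ((((1:ℝ)+b)+3*1-4)*(((1:ℝ)+b)+3*b-4) - (1:ℝ)*b) = 0 := by
    rw [hr2]; linear_combination ((1:ℝ)/4) * hs2
  have hmax : maxEig hH = r₁ :=
    maxEig_eq_of hH hub (exists_eig_of_mulVec hH (hvne r₁) (hvec r₁ hroot1))
  have hmin : minEig hH = r₂ :=
    minEig_eq_of hH hlb (exists_eig_of_mulVec hH (hvne r₂) (hvec r₂ hroot2))
  show maxEig _ - minEig _ = _
  rw [hmax, hmin, hr1, hr2]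
  ring

end SpreadFormulas

set_option maxHeartbeats 1000000 in
theorem stmt12 (n a : ℕ) (hn : 4 ≤ n) (ha1 : 1 ≤ a) (ha2 : 2*a ≤ n) :
    distSLSpread (completeBipartiteGraph (Fin (n / 2)) (Fin (n - n / 2))) ≤
      distSLSpread (completeBipartiteGraph (Fin a) (Fin (n - a))) ∧
    (distSLSpread (completeBipartiteGraph (Fin a) (Fin (n - a))) =
        distSLSpread (completeBipartiteGraph (Fin (n / 2)) (Fin (n - n / 2))) ↔ a = n / 2) := by
  set m := n / 2 with hm_def
  have hm2 : 2 ≤ m := by omega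
  have h2m : 2 * m ≤ n := by omega
  have h2m' : n ≤ 2 * m + 1 := by omega
  have hmn : m ≤ n - m := by omega
  have ham : a ≤ m := by omega
  rcases eq_or_lt_of_le ham with heq | hlt
  · subst heq
    exact ⟨le_refl _, ⟨fun _ => rfl, fun _ => rfl⟩⟩
  · -- a < m; strict inequality
    have hmle : m ≤ n := by omega
    have hale : a ≤ n := by omega
    have hcastm : ((n - m : ℕ) : ℝ) = (n:ℝ) - m := by
      push_cast [Nat.cast_sub hmle]; ring
    have hcasta : ((n - a : ℕ) : ℝ) = (n:ℝ) - a := by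
      push_cast [Nat.cast_sub hale]; ring
    have hN4 : (4:ℝ) ≤ (n:ℝ) := by exact_mod_cast hn
    have hM2 : (2:ℝ) ≤ (m:ℝ) := by exact_mod_cast hm2
    have hAM : (a:ℝ) < (m:ℝ) := by exact_mod_cast hlt
    have h2MN : 2*(m:ℝ) ≤ (n:ℝ) := by exact_mod_cast h2m
    have h2MN' : (n:ℝ) ≤ 2*(m:ℝ)+1 := by exact_mod_cast h2m'
    have hSm : distSLSpread (completeBipartiteGraph (Fin m) (Fin (n - m))) =
        (3*(n:ℝ) - 2*m + Real.sqrt (9*((n:ℝ)-2*m)^2 + 4*m*((n:ℝ)-m)))/2 := by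
      rw [spread_ab m (n - m) hm2 hmn, hcastm,
        show 9*(((n:ℝ)-m)-m)^2 + 4*m*((n:ℝ)-m) = 9*((n:ℝ)-2*m)^2 + 4*m*((n:ℝ)-m) by ring,
        show 3*((m:ℝ)+((n:ℝ)-m)) - 2*m = 3*(n:ℝ) - 2*m by ring]
    have hstrict : distSLSpread (completeBipartiteGraph (Fin m) (Fin (n - m))) <
        distSLSpread (completeBipartiteGraph (Fin a) (Fin (n - a))) := by
      rcases eq_or_lt_of_le ha1 with ha1' | ha2'
      · -- a = 1
        have ha1'' : a = 1 := ha1'.symm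
        subst ha1''
        have hb3 : 3 ≤ n - 1 := by omega
        have hSa : distSLSpread (completeBipartiteGraph (Fin 1) (Fin (n - 1))) =
            Real.sqrt (9*((n:ℝ)-2)^2 + 4*((n:ℝ)-1)) := by
          rw [spread_1b (n - 1) hb3,
            show ((n - 1 : ℕ) : ℝ) = (n:ℝ) - 1 by
              push_cast [Nat.cast_sub (show 1 ≤ n by omega)]; ring,
            show 9*(((n:ℝ)-1)-1)^2 + 4*((n:ℝ)-1) = 9*((n:ℝ)-2)^2 + 4*((n:ℝ)-1) by ring]
        rw [hSm, hSa]
        have hD1 : (0:ℝ) ≤ 9*((n:ℝ)-2)^2 + 4*((n:ℝ)-1) := by nlinarith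
        rcases (show n = 2*m ∨ n = 2*m + 1 by omega) with hpar | hpar
        · -- even
          have hNM : (n:ℝ) = 2*m := by exact_mod_cast hpar
          have hsqm : Real.sqrt (9*((n:ℝ)-2*m)^2 + 4*m*((n:ℝ)-m)) = (n:ℝ) := by
            rw [show 9*((n:ℝ)-2*m)^2 + 4*m*((n:ℝ)-m) = (n:ℝ)^2 by rw [hNM]; ring]
            exact Real.sqrt_sq (by linarith)
          rw [hsqm]
          rw [show (3*(n:ℝ) - 2*m + n)/2 = 3*(n:ℝ)/2 by rw [hNM]; ring]
          have : (3*(n:ℝ)/2)^2 < 9*((n:ℝ)-2)^2 + 4*((n:ℝ)-1) := by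
            nlinarith [sq_nonneg ((n:ℝ)-4), hN4]
          exact (Real.lt_sqrt (by linarith)).mpr this
        · -- odd
          have hNM : (n:ℝ) = 2*m+1 := by exact_mod_cast hpar
          have hN5 : (5:ℝ) ≤ (n:ℝ) := by
            have : 5 ≤ n := by omega
            exact_mod_cast this
          have hsqm : Real.sqrt (9*((n:ℝ)-2*m)^2 + 4*m*((n:ℝ)-m)) <
              (n:ℝ) + 2 := by
            rw [show 9*((n:ℝ)-2*m)^2 + 4*m*((n:ℝ)-m) = (n:ℝ)^2 + 8 by rw [hNM]; ring]
            rw [Real.sqrt_lt' (by linarith)]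
            nlinarith [hN5]
          have hkey : (3*(n:ℝ)+3)/2 ≤ Real.sqrt (9*((n:ℝ)-2)^2 + 4*((n:ℝ)-1)) := by
            rw [Real.le_sqrt (by linarith) hD1]
            nlinarith [mul_nonneg (show (0:ℝ) ≤ (n:ℝ)-5 by linarith)
              (show (0:ℝ) ≤ 27*(n:ℝ)-11 by linarith)]
          have h2M : 2*(m:ℝ) = (n:ℝ) - 1 := by rw [hNM]; ring
          have hsm' : (3*(n:ℝ) - 2*m + Real.sqrt (9*((n:ℝ)-2*m)^2 + 4*m*((n:ℝ)-m)))/2 <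
              (3*(n:ℝ)+3)/2 := by linarith [hsqm, h2M]
          exact lt_of_lt_of_le hsm' hkey
      · -- 2 ≤ a
        have h2a : 2 ≤ a := ha2'
        have habn : a ≤ n - a := by omega
        have hSa : distSLSpread (completeBipartiteGraph (Fin a) (Fin (n - a))) =
            (3*(n:ℝ) - 2*a + Real.sqrt (9*((n:ℝ)-2*a)^2 + 4*a*((n:ℝ)-a)))/2 := by
          rw [spread_ab a (n - a) h2a habn, hcasta,
            show 9*(((n:ℝ)-a)-a)^2 + 4*a*((n:ℝ)-a) = 9*((n:ℝ)-2*a)^2 + 4*a*((n:ℝ)-a) by ring,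
            show 3*((a:ℝ)+((n:ℝ)-a)) - 2*a = 3*(n:ℝ) - 2*a by ring]
        rw [hSm, hSa]
        have hA1 : (1:ℝ) ≤ (a:ℝ) := by exact_mod_cast ha1
        have hamn : (a:ℝ) + m ≤ (n:ℝ) := by linarith
        have hmono : Real.sqrt (9*((n:ℝ)-2*m)^2 + 4*m*((n:ℝ)-m)) ≤
            Real.sqrt (9*((n:ℝ)-2*a)^2 + 4*a*((n:ℝ)-a)) := by
          apply Real.sqrt_le_sqrt
          nlinarith [mul_nonneg (show (0:ℝ) ≤ (m:ℝ)-a by linarith)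
            (show (0:ℝ) ≤ (n:ℝ)-a-m by linarith)]
        linarith
    refine ⟨le_of_lt hstrict, ⟨fun h => absurd h (ne_of_gt hstrict), fun h => ?_⟩⟩
    exact absurd h (by omega)
end

section
/- Let G be a connected simple graph on n vertices with Wiener index W and clique number ω satisfying 2 ≤ ω ≤ n−1. Let U ⊆ V(G) be any clique of G with |U| = ω, and set s = Σ_{v∈U} Tr_G(v), a = nω(1−ω) + 4ω(s − W) − ns, and b = 4Wω(ω−1) + 4s(W−s). Then S_𝒬(G) ≥ √(a² − 4b(n−ω)ω) / ((n−ω)ω). -/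
open Finset Matrix

/- ### Auxiliary lemmas -/

lemma rayleigh_bounds {V : Type*} [Fintype V] [DecidableEq V] [Nonempty V]
    {A : Matrix V V ℝ} (hA : A.IsHermitian) (x : V → ℝ) :
    minEig hA * (x ⬝ᵥ x) ≤ x ⬝ᵥ A *ᵥ x ∧ x ⬝ᵥ A *ᵥ x ≤ maxEig hA * (x ⬝ᵥ x) := by
  set P : Matrix V V ℝ := (hA.eigenvectorUnitary : Matrix V V ℝ) with hP
  set c : V → ℝ := Pᵀ *ᵥ x with hc
  have hstar : star P = Pᵀ := by
    ext i j; simp [Matrix.star_apply]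
  have hvP : x ᵥ* P = c := by rw [hc, Matrix.mulVec_transpose]
  have hPPt : P * Pᵀ = 1 := by
    rw [← hstar]; exact Unitary.coe_mul_star_self hA.eigenvectorUnitary
  have hx : x ⬝ᵥ A *ᵥ x = ∑ i, hA.eigenvalues i * (c i)^2 := by
    conv_lhs => rw [hA.spectral_theorem, Unitary.conjStarAlgAut_apply, hstar, ← mulVec_mulVec, ← mulVec_mulVec,
      dotProduct_mulVec, hvP]
    simp only [dotProduct, mulVec_diagonal, Function.comp_apply, RCLike.ofReal_real_eq_id, id]
    exact Finset.sum_congr rfl fun i _ => by ring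
  have hxx : x ⬝ᵥ x = ∑ i, (c i)^2 := by
    have h1 : x ⬝ᵥ x = x ⬝ᵥ (P * Pᵀ) *ᵥ x := by rw [hPPt, one_mulVec]
    rw [h1, ← mulVec_mulVec, dotProduct_mulVec, hvP]
    simp [dotProduct, sq]; rfl
  constructor
  · rw [hx, hxx, Finset.mul_sum]
    refine Finset.sum_le_sum fun i _ => ?_
    exact mul_le_mul_of_nonneg_right
      (ciInf_le (Set.Finite.bddBelow (Set.finite_range _)) i) (sq_nonneg _)
  · rw [hx, hxx, Finset.mul_sum]
    refine Finset.sum_le_sum fun i _ => ?_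
    exact mul_le_mul_of_nonneg_right
      (le_ciSup (Set.Finite.bddAbove (Set.finite_range _)) i) (sq_nonneg _)

lemma exists_angle (c s0 : ℝ) (h : c^2 + s0^2 = 1) :
    ∃ α β : ℝ, α^2 + β^2 = 1 ∧ α^2 - β^2 = c ∧ 2*α*β = s0 := by
  have hc1 : -1 ≤ c ∧ c ≤ 1 := abs_le.mp (by nlinarith [sq_abs c, sq_nonneg s0])
  have hα2 : (Real.sqrt ((1 + c)/2))^2 = (1 + c)/2 := Real.sq_sqrt (by linarith [hc1.1])
  have hβ2 : (Real.sqrt ((1 - c)/2))^2 = (1 - c)/2 := Real.sq_sqrt (by linarith [hc1.2])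
  refine ⟨Real.sqrt ((1 + c)/2), (if s0 < 0 then (-1:ℝ) else 1) * Real.sqrt ((1 - c)/2),
    ?_, ?_, ?_⟩
  · rcases lt_or_ge s0 0 with hh | hh
    · rw [if_pos hh, mul_pow]; nlinarith [hα2, hβ2]
    · rw [if_neg (not_lt.mpr hh), mul_pow]; nlinarith [hα2, hβ2]
  · rcases lt_or_ge s0 0 with hh | hh
    · rw [if_pos hh, mul_pow]; nlinarith [hα2, hβ2]
    · rw [if_neg (not_lt.mpr hh), mul_pow]; nlinarith [hα2, hβ2]
  · have hs : Real.sqrt ((1+c)/2) * Real.sqrt ((1-c)/2) = |s0| / 2 := by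
      rw [← Real.sqrt_mul (by linarith [hc1.1])]
      have h1 : (1+c)/2 * ((1-c)/2) = (s0/2)^2 := by nlinarith [h]
      rw [h1, Real.sqrt_sq_eq_abs, abs_div]
      norm_num
    rcases lt_or_ge s0 0 with hh | hh
    · rw [if_pos hh]
      rw [abs_of_neg hh] at hs
      nlinarith [hs]
    · rw [if_neg (not_lt.mpr hh)]
      rw [abs_of_nonneg hh] at hs
      nlinarith [hs]

lemma trig_lemma (p q r M : ℝ)
    (key : ∀ α β : ℝ, α^2 + β^2 = 1 → (α^2 - β^2)*(p - q) + 4*α*β*r ≤ M) :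
    Real.sqrt ((p - q)^2 + 4*r^2) ≤ M := by
  have hD0 : (0:ℝ) ≤ (p - q)^2 + 4*r^2 := by positivity
  rcases eq_or_lt_of_le hD0 with hDz | hDpos
  · rw [← hDz, Real.sqrt_zero]
    have := key 1 0 (by norm_num)
    nlinarith [this]
  have he2 : (Real.sqrt ((p - q)^2 + 4*r^2))^2 = (p - q)^2 + 4*r^2 := Real.sq_sqrt hD0
  have hepos : 0 < Real.sqrt ((p - q)^2 + 4*r^2) := Real.sqrt_pos.mpr hDpos
  generalize hE : Real.sqrt ((p - q)^2 + 4*r^2) = e at *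
  have hcs : ((p-q)/e)^2 + (2*r/e)^2 = 1 := by
    field_simp
    nlinarith [he2]
  obtain ⟨α, β, h1, h2, h3⟩ := exists_angle ((p-q)/e) (2*r/e) hcs
  have hkey := key α β h1
  have hval : (α^2 - β^2)*(p - q) + 4*α*β*r = e := by
    rw [h2]
    have h4 : 4*α*β*r = 2*(2*α*β)*r := by ring
    rw [h4, h3]
    field_simp
    nlinarith [he2]
  linarith [hkey, hval.le]

lemma spread_bound {V : Type*} [Fintype V] [DecidableEq V] [Nonempty V]
    {A : Matrix V V ℝ} (hA : A.IsHermitian) (x y : V → ℝ)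
    (hxx : x ⬝ᵥ x = 1) (hyy : y ⬝ᵥ y = 1) (hxy : x ⬝ᵥ y = 0) :
    Real.sqrt ((x ⬝ᵥ A *ᵥ x - y ⬝ᵥ A *ᵥ y)^2 + 4 * (x ⬝ᵥ A *ᵥ y)^2)
      ≤ maxEig hA - minEig hA := by
  have hAt : Aᵀ = A := by
    nth_rewrite 2 [← hA.eq]
    ext i j; simp [Matrix.conjTranspose_apply, Matrix.transpose_apply]
  have hsym : y ⬝ᵥ A *ᵥ x = x ⬝ᵥ A *ᵥ y := by
    rw [dotProduct_mulVec y A x, ← Matrix.mulVec_transpose, hAt, dotProduct_comm]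
  have expand : ∀ α β : ℝ, (α • x + β • y) ⬝ᵥ A *ᵥ (α • x + β • y)
      = α^2 * (x ⬝ᵥ A *ᵥ x) + 2*α*β*(x ⬝ᵥ A *ᵥ y) + β^2 * (y ⬝ᵥ A *ᵥ y) := by
    intro α β
    simp only [Matrix.mulVec_add, Matrix.mulVec_smul, dotProduct_add, add_dotProduct,
      smul_dotProduct, dotProduct_smul, smul_eq_mul, hsym]
    ring
  have norm1 : ∀ α β : ℝ, α^2 + β^2 = 1 → (α • x + β • y) ⬝ᵥ (α • x + β • y) = 1 := by
    intro α β h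
    simp only [dotProduct_add, add_dotProduct, smul_dotProduct, dotProduct_smul, smul_eq_mul,
      hxx, hyy, hxy, dotProduct_comm y x, mul_one, mul_zero, zero_mul]
    nlinarith [h]
  apply trig_lemma
  intro α β h
  have h1 := (rayleigh_bounds hA (α • x + β • y)).2
  have h2 := (rayleigh_bounds hA ((-β) • x + α • y)).1
  rw [norm1 α β h, expand α β, mul_one] at h1
  have h' : (-β)^2 + α^2 = 1 := by nlinarith
  rw [norm1 (-β) α h', expand (-β) α, mul_one] at h2
  nlinarith [h1, h2]

lemma indicator_quad {V : Type*} [Fintype V] [DecidableEq V] (M : Matrix V V ℝ)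
    (S T : Finset V) (cS cT : ℝ) :
    (fun v => if v ∈ S then cS else 0) ⬝ᵥ M *ᵥ (fun v => if v ∈ T then cT else 0)
      = cS * cT * ∑ u ∈ S, ∑ v ∈ T, M u v := by
  simp only [dotProduct, mulVec, dotProduct, mul_ite, mul_zero, ite_mul, zero_mul,
    Finset.sum_ite_mem, Finset.univ_inter]
  rw [Finset.mul_sum]
  refine Finset.sum_congr rfl fun u _ => ?_
  rw [Finset.mul_sum, Finset.mul_sum]
  exact Finset.sum_congr rfl fun v _ => by ring

lemma indicator_dot {V : Type*} [Fintype V] [DecidableEq V]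
    (S T : Finset V) (cS cT : ℝ) :
    (fun v => if v ∈ S then cS else 0) ⬝ᵥ (fun v => if v ∈ T then cT else 0)
      = cS * cT * ((S ∩ T).card : ℝ) := by
  simp only [dotProduct, ite_mul, zero_mul, mul_ite, mul_zero, Finset.sum_ite_mem,
    Finset.univ_inter]
  rw [Finset.inter_comm, Finset.sum_const, nsmul_eq_mul]
  ring

theorem stmt14 {V : Type*} [Fintype V] [DecidableEq V] (G : SimpleGraph V)
    (hconn : G.Connected)
    (n : ℕ) (hn : n = Fintype.card V)
    (W : ℝ) (hW : W = (∑ u, transmission G u) / 2)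
    (ω : ℕ) (hω : G.cliqueNum = ω) (hω2 : 2 ≤ ω) (hωn : ω + 1 ≤ n)
    (U : Finset V) (hU : G.IsNClique ω U)
    (s a b : ℝ)
    (hs : s = ∑ v ∈ U, transmission G v)
    (ha : a = n*ω*(1 - ω) + 4*ω*(s - W) - n*s)
    (hb : b = 4*W*ω*(ω - 1) + 4*s*(W - s)) :
    Real.sqrt (a^2 - 4*b*(n - ω)*ω) / (((n : ℝ) - ω)*ω) ≤ distSLSpread G := by
  have hcard : U.card = ω := hU.2
  have hk2 : (2:ℝ) ≤ (ω:ℝ) := by exact_mod_cast hω2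
  have hk0 : (0:ℝ) < (ω:ℝ) := by linarith
  have hnk : (ω:ℝ) + 1 ≤ (n:ℝ) := by exact_mod_cast hωn
  have hm0 : (0:ℝ) < (n:ℝ) - (ω:ℝ) := by linarith
  have hNV : Nonempty V := by
    rw [← Fintype.card_pos_iff, ← hn]; omega
  have hωn' : ω ≤ Fintype.card V := by omega
  have hcardc : ((Uᶜ : Finset V).card : ℝ) = (n:ℝ) - (ω:ℝ) := by
    rw [Finset.card_compl, hcard, hn]
    push_cast [Nat.cast_sub hωn']
    ring
  -- distance 1 within the clique
  have hd1 : ∀ u ∈ U, ∀ v ∈ U, u ≠ v → (G.dist u v : ℝ) = 1 := by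
    intro u hu v hv huv
    have : G.dist u v = 1 :=
      (SimpleGraph.dist_eq_one_iff_adj).mpr (hU.1 (Finset.mem_coe.mpr hu)
        (Finset.mem_coe.mpr hv) huv)
    exact_mod_cast this
  -- row sums within the clique
  have hrow : ∀ u ∈ U, ∑ v ∈ U, (G.dist u v : ℝ) = (ω:ℝ) - 1 := by
    intro u hu
    rw [← Finset.add_sum_erase U _ hu]
    have h0 : (G.dist u u : ℝ) = 0 := by simp [SimpleGraph.dist_self]
    have h1 : ∑ v ∈ U.erase u, (G.dist u v : ℝ) = ∑ v ∈ U.erase u, 1 :=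
      Finset.sum_congr rfl fun v hv =>
        hd1 u hu v (Finset.mem_of_mem_erase hv) (Ne.symm (Finset.ne_of_mem_erase hv))
    rw [h0, h1, zero_add, Finset.sum_const, Finset.card_erase_of_mem hu, hcard,
      nsmul_eq_mul, mul_one]
    push_cast [Nat.cast_sub (by omega : 1 ≤ ω)]
    ring
  have hsplit : ∀ u : V, ∑ v ∈ U, (G.dist u v : ℝ) + ∑ v ∈ Uᶜ, (G.dist u v : ℝ)
      = transmission G u := fun u => Finset.sum_add_sum_compl U _
  have htr_total : ∑ u, transmission G u = 2*W := by rw [hW]; ring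
  have htrU : ∑ u ∈ U, transmission G u = s := hs.symm
  have htrC : ∑ u ∈ Uᶜ, transmission G u = 2*W - s := by
    have := Finset.sum_add_sum_compl U (transmission G)
    rw [htrU, htr_total] at this
    linarith
  -- the four distance block sums
  have SUU : ∑ u ∈ U, ∑ v ∈ U, (G.dist u v : ℝ) = (ω:ℝ)*((ω:ℝ)-1) := by
    rw [Finset.sum_congr rfl hrow, Finset.sum_const, hcard, nsmul_eq_mul]
  have SUC : ∑ u ∈ U, ∑ v ∈ Uᶜ, (G.dist u v : ℝ) = s - (ω:ℝ)*((ω:ℝ)-1) := by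
    have h1 : ∑ u ∈ U, (∑ v ∈ U, (G.dist u v : ℝ) + ∑ v ∈ Uᶜ, (G.dist u v : ℝ))
        = ∑ u ∈ U, transmission G u := Finset.sum_congr rfl fun u _ => hsplit u
    rw [Finset.sum_add_distrib, SUU, htrU] at h1
    linarith
  have SCU : ∑ u ∈ Uᶜ, ∑ v ∈ U, (G.dist u v : ℝ) = s - (ω:ℝ)*((ω:ℝ)-1) := by
    rw [Finset.sum_comm]
    rw [← SUC]
    exact Finset.sum_congr rfl fun v _ => Finset.sum_congr rfl fun u _ => by
      rw [SimpleGraph.dist_comm]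
  have SCC : ∑ u ∈ Uᶜ, ∑ v ∈ Uᶜ, (G.dist u v : ℝ)
      = 2*W - s - (s - (ω:ℝ)*((ω:ℝ)-1)) := by
    have h1 : ∑ u ∈ Uᶜ, (∑ v ∈ U, (G.dist u v : ℝ) + ∑ v ∈ Uᶜ, (G.dist u v : ℝ))
        = ∑ u ∈ Uᶜ, transmission G u := Finset.sum_congr rfl fun u _ => hsplit u
    rw [Finset.sum_add_distrib, SCU, htrC] at h1
    linarith
  -- diagonal block sums
  have DUU : ∑ u ∈ U, ∑ v ∈ U, Matrix.diagonal (transmission G) u v = s := by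
    rw [← htrU]
    refine Finset.sum_congr rfl fun u hu => ?_
    simp only [Matrix.diagonal_apply]
    rw [Finset.sum_ite_eq U u (fun _ => transmission G u), if_pos hu]
  have DUC : ∑ u ∈ U, ∑ v ∈ Uᶜ, Matrix.diagonal (transmission G) u v = 0 := by
    refine Finset.sum_eq_zero fun u hu => ?_
    simp only [Matrix.diagonal_apply]
    rw [Finset.sum_ite_eq (Uᶜ) u (fun _ => transmission G u),
      if_neg (by simp [Finset.mem_compl, hu])]
  have DCC : ∑ u ∈ Uᶜ, ∑ v ∈ Uᶜ, Matrix.diagonal (transmission G) u v = 2*W - s := by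
    rw [← htrC]
    refine Finset.sum_congr rfl fun u hu => ?_
    simp only [Matrix.diagonal_apply]
    rw [Finset.sum_ite_eq (Uᶜ) u (fun _ => transmission G u), if_pos hu]
  -- block sums of distSLMatrix
  have QUU : ∑ u ∈ U, ∑ v ∈ U, distSLMatrix G u v = s + (ω:ℝ)*((ω:ℝ)-1) := by
    simp only [distSLMatrix, distMatrix, Matrix.add_apply, Matrix.of_apply,
      Finset.sum_add_distrib]
    rw [DUU, SUU]
  have QUC : ∑ u ∈ U, ∑ v ∈ Uᶜ, distSLMatrix G u v = s - (ω:ℝ)*((ω:ℝ)-1) := by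
    simp only [distSLMatrix, distMatrix, Matrix.add_apply, Matrix.of_apply,
      Finset.sum_add_distrib]
    rw [DUC, SUC]
    ring
  have QCC : ∑ u ∈ Uᶜ, ∑ v ∈ Uᶜ, distSLMatrix G u v
      = 4*W - 3*s + (ω:ℝ)*((ω:ℝ)-1) := by
    simp only [distSLMatrix, distMatrix, Matrix.add_apply, Matrix.of_apply,
      Finset.sum_add_distrib]
    rw [DCC, SCC]
    ring
  -- indicator vectors
  have htx2 : ((Real.sqrt (ω:ℝ))⁻¹)^2 = ((ω:ℝ))⁻¹ := by
    rw [inv_pow, Real.sq_sqrt hk0.le]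
  have hty2 : ((Real.sqrt ((n:ℝ)-(ω:ℝ)))⁻¹)^2 = ((n:ℝ)-(ω:ℝ))⁻¹ := by
    rw [inv_pow, Real.sq_sqrt hm0.le]
  set tx : ℝ := (Real.sqrt (ω:ℝ))⁻¹
  set ty : ℝ := (Real.sqrt ((n:ℝ)-(ω:ℝ)))⁻¹
  have hxx : (fun v => if v ∈ U then tx else 0) ⬝ᵥ (fun v => if v ∈ U then tx else 0) = 1 := by
    rw [indicator_dot, Finset.inter_self, hcard]
    rw [show tx * tx = tx^2 by ring, htx2]
    field_simp
  have hyy : (fun v => if v ∈ Uᶜ then ty else 0) ⬝ᵥ (fun v => if v ∈ Uᶜ then ty else 0) = 1 := by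
    rw [indicator_dot, Finset.inter_self, hcardc]
    rw [show ty * ty = ty^2 by ring, hty2]
    field_simp
  have hxy : (fun v => if v ∈ U then tx else 0) ⬝ᵥ (fun v => if v ∈ Uᶜ then ty else 0) = 0 := by
    rw [indicator_dot, Finset.inter_compl]
    simp
  have hp := indicator_quad (distSLMatrix G) U U tx tx
  rw [QUU] at hp
  have hq := indicator_quad (distSLMatrix G) (Uᶜ) (Uᶜ) ty ty
  rw [QCC] at hq
  have hr := indicator_quad (distSLMatrix G) U (Uᶜ) tx ty
  rw [QUC] at hr
  have main := spread_bound (distSLMatrix_isHermitian G)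
    (fun v => if v ∈ U then tx else 0) (fun v => if v ∈ Uᶜ then ty else 0) hxx hyy hxy
  set X := (fun v => if v ∈ U then tx else 0) ⬝ᵥ distSLMatrix G *ᵥ (fun v => if v ∈ U then tx else 0) with hXd
  set Y := (fun v => if v ∈ Uᶜ then ty else 0) ⬝ᵥ distSLMatrix G *ᵥ (fun v => if v ∈ Uᶜ then ty else 0) with hYd
  set R := (fun v => if v ∈ U then tx else 0) ⬝ᵥ distSLMatrix G *ᵥ (fun v => if v ∈ Uᶜ then ty else 0) with hRd
  have hR2 : R^2 = ((ω:ℝ))⁻¹ * ((n:ℝ)-(ω:ℝ))⁻¹ * (s - (ω:ℝ)*((ω:ℝ)-1))^2 := by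
    rw [hr, mul_pow, mul_pow, htx2, hty2]
  have hID : a^2 - 4*b*((n:ℝ) - ω)*ω
      = ((X - Y)^2 + 4 * R^2) * (((n:ℝ) - ω)*ω)^2 := by
    rw [hp, hq, hR2, ha, hb,
      show tx * tx = tx^2 by ring, show ty * ty = ty^2 by ring, htx2, hty2]
    field_simp
    ring
  have hX0 : (0:ℝ) ≤ (X - Y)^2 + 4 * R^2 := by positivity
  have hmk : (0:ℝ) < ((n:ℝ) - ω)*ω := mul_pos hm0 hk0
  rw [hID, Real.sqrt_mul hX0, Real.sqrt_sq hmk.le, mul_div_assoc, div_self hmk.ne', mul_one]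
  exact main
end

section
/- Let G be a connected simple graph on n vertices with Wiener index W and clique number ω satisfying 2 ≤ ω ≤ n−1. Let U ⊆ V(G) be any clique of G with |U| = ω, and set s = Σ_{v∈U} Tr_G(v), a = nω(1−ω) + 4ω(s − W) − ns, and b = 4Wω(ω−1) + 4s(W−s). Then the largest distance signless Laplacian eigenvalue satisfies q^𝒟(G) ≥ (−a + √(a² − 4b(n−ω)ω)) / (2(n−ω)ω). -/
open Finset Matrix

lemma rayleigh_aux {V : Type*} [Fintype V] [DecidableEq V] {A : Matrix V V ℝ}
    (hA : A.IsHermitian) (x : V → ℝ) :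
    x ⬝ᵥ (A *ᵥ x) ≤ maxEig hA * (x ⬝ᵥ x) := by
  classical
  set Uu := (hA.eigenvectorUnitary : Matrix V V ℝ) with hUu
  set y := star Uu *ᵥ x with hy
  have hstar : star Uu = Uuᵀ := by
    ext i j
    simp [Matrix.star_eq_conjTranspose, Matrix.conjTranspose_apply]
  have hxy : ∀ z : V → ℝ, x ⬝ᵥ (Uu *ᵥ z) = y ⬝ᵥ z := by
    intro z
    rw [dotProduct_mulVec, hy, hstar, mulVec_transpose]
  have hmul : Uu * star Uu = 1 := (Matrix.mem_unitaryGroup_iff).mp hA.eigenvectorUnitary.2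
  have hxx : x ⬝ᵥ x = y ⬝ᵥ y := by
    have h := hxy (star Uu *ᵥ x)
    rwa [mulVec_mulVec, hmul, one_mulVec, ← hy] at h
  have hAx : x ⬝ᵥ (A *ᵥ x) = ∑ i, hA.eigenvalues i * (y i * y i) := by
    conv_lhs => rw [hA.spectral_theorem, Unitary.conjStarAlgAut_apply]
    rw [← mulVec_mulVec, ← mulVec_mulVec, hxy]
    simp [dotProduct, mulVec_diagonal, hy]
    ring_nf
    apply Finset.sum_congr rfl
    intro i _
    ring
  rw [hAx, hxx]
  have hq : ∀ i, hA.eigenvalues i ≤ maxEig hA := fun i =>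
    le_ciSup (Set.Finite.bddAbove (Set.finite_range _)) i
  calc ∑ i, hA.eigenvalues i * (y i * y i)
      ≤ ∑ i, maxEig hA * (y i * y i) := by
        apply Finset.sum_le_sum
        intro i _
        exact mul_le_mul_of_nonneg_right (hq i) (mul_self_nonneg _)
    _ = maxEig hA * (y ⬝ᵥ y) := by rw [dotProduct, Finset.mul_sum]

set_option maxHeartbeats 1000000 in
theorem stmt15 {V : Type*} [Fintype V] [DecidableEq V] (G : SimpleGraph V)
    (hconn : G.Connected)
    (n : ℕ) (hn : n = Fintype.card V)
    (W : ℝ) (hW : W = (∑ u, transmission G u) / 2)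
    (ω : ℕ) (hω : G.cliqueNum = ω) (hω2 : 2 ≤ ω) (hωn : ω + 1 ≤ n)
    (U : Finset V) (hU : G.IsNClique ω U)
    (s a b : ℝ)
    (hs : s = ∑ v ∈ U, transmission G v)
    (ha : a = n*ω*(1 - ω) + 4*ω*(s - W) - n*s)
    (hb : b = 4*W*ω*(ω - 1) + 4*s*(W - s)) :
    (-a + Real.sqrt (a^2 - 4*b*(n - ω)*ω)) / (2*((n : ℝ) - ω)*ω) ≤
      maxEig (distSLMatrix_isHermitian G) := by
  classical
  set q := maxEig (distSLMatrix_isHermitian G) with hqdef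
  have hcardU : U.card = ω := hU.2
  have hωn' : (ω:ℝ) + 1 ≤ (n:ℝ) := by exact_mod_cast hωn
  have hω2' : (2:ℝ) ≤ (ω:ℝ) := by exact_mod_cast hω2
  have hωpos : (0:ℝ) < ω := by linarith
  have hnω : (0:ℝ) < (n:ℝ) - ω := by linarith
  have hωlen : ω ≤ n := le_trans (Nat.le_succ ω) hωn
  have hcardUc : ((Uᶜ).card : ℝ) = (n:ℝ) - ω := by
    rw [Finset.card_compl, hcardU, ← hn, Nat.cast_sub hωlen]
  -- distance values inside the clique
  have hdU : ∀ v ∈ U, ∀ u ∈ U, (G.dist v u : ℝ) = if v = u then 0 else 1 := by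
    intro v hv u hu
    by_cases h : v = u
    · simp [h]
    · rw [if_neg h]
      have hadj : G.Adj v u := hU.1 hv hu h
      have : G.dist v u = 1 := SimpleGraph.dist_eq_one_iff_adj.mpr hadj
      rw [this]; norm_num
  -- the four block sums
  set T1 := ∑ v ∈ U, ∑ u ∈ U, (G.dist v u : ℝ) with hT1def
  set T2 := ∑ v ∈ U, ∑ u ∈ Uᶜ, (G.dist v u : ℝ) with hT2def
  set T3 := ∑ v ∈ Uᶜ, ∑ u ∈ U, (G.dist v u : ℝ) with hT3def
  set T4 := ∑ v ∈ Uᶜ, ∑ u ∈ Uᶜ, (G.dist v u : ℝ) with hT4def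
  set sU := ∑ v ∈ U, transmission G v with hsUdef
  set sC := ∑ v ∈ Uᶜ, transmission G v with hsCdef
  have hT1 : T1 = (ω:ℝ) * ((ω:ℝ) - 1) := by
    have h1 : ∀ v ∈ U, ∑ u ∈ U, (G.dist v u : ℝ) = (ω:ℝ) - 1 := by
      intro v hv
      rw [Finset.sum_congr rfl (fun u hu => hdU v hv u hu)]
      rw [Finset.sum_congr rfl (fun u (hu : u ∈ U) =>
        (by split <;> ring : (if v = u then (0:ℝ) else 1) = 1 - (if v = u then 1 else 0)))]
      rw [Finset.sum_sub_distrib, Finset.sum_const, Finset.sum_ite_eq, if_pos hv, hcardU]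
      simp
    rw [hT1def, Finset.sum_congr rfl h1, Finset.sum_const, hcardU, nsmul_eq_mul]
  have htr : ∀ v, transmission G v
      = ∑ u ∈ U, (G.dist v u:ℝ) + ∑ u ∈ Uᶜ, (G.dist v u:ℝ) :=
    fun v => (Finset.sum_add_sum_compl U _).symm
  have hsU : sU = s := hs.symm
  have hsplitU : sU = T1 + T2 := by
    rw [hsUdef, Finset.sum_congr rfl (fun v _ => htr v), Finset.sum_add_distrib]
  have hsplitC : sC = T3 + T4 := by
    rw [hsCdef, Finset.sum_congr rfl (fun v _ => htr v), Finset.sum_add_distrib]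
  have hT3 : T3 = T2 := by
    rw [hT3def, Finset.sum_comm]
    exact Finset.sum_congr rfl fun v _ => Finset.sum_congr rfl fun u _ => by
      rw [SimpleGraph.dist_comm]
  have htot : sU + sC = 2*W := by
    rw [hsUdef, hsCdef, Finset.sum_add_sum_compl, hW]; ring
  -- Rayleigh inequality for block-constant vectors
  have hRay : ∀ α β : ℝ,
      (s + (ω:ℝ)*((ω:ℝ)-1))*(α*α) + 2*(s-(ω:ℝ)*((ω:ℝ)-1))*(α*β)
        + (4*W-3*s+(ω:ℝ)*((ω:ℝ)-1))*(β*β)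
      ≤ q * ((ω:ℝ)*(α*α) + ((n:ℝ)-(ω:ℝ))*(β*β)) := by
    intro α β
    set x : V → ℝ := fun v => if v ∈ U then α else β with hxdef
    have hxU : ∀ v ∈ U, x v = α := fun v hv => if_pos hv
    have hxC : ∀ v ∈ Uᶜ, x v = β := fun v hv => if_neg (Finset.mem_compl.mp hv)
    have hxx : x ⬝ᵥ x = (ω:ℝ)*(α*α) + ((n:ℝ)-(ω:ℝ))*(β*β) := by
      rw [dotProduct, ← Finset.sum_add_sum_compl U]
      rw [Finset.sum_congr rfl (fun v hv => by rw [hxU v hv] :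
            ∀ v ∈ U, x v * x v = α*α),
          Finset.sum_congr rfl (fun v hv => by rw [hxC v hv] :
            ∀ v ∈ Uᶜ, x v * x v = β*β),
          Finset.sum_const, Finset.sum_const, hcardU, nsmul_eq_mul, nsmul_eq_mul, hcardUc]
    have ediag : x ⬝ᵥ (Matrix.diagonal (transmission G) *ᵥ x)
        = sU*(α*α) + sC*(β*β) := by
      have h1 : ∀ v, x v * ((Matrix.diagonal (transmission G) *ᵥ x) v)
          = transmission G v * (x v * x v) := by
        intro v; rw [mulVec_diagonal]; ring
      rw [dotProduct, Finset.sum_congr rfl (fun v _ => h1 v), ← Finset.sum_add_sum_compl U]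
      congr 1
      · rw [Finset.sum_congr rfl (fun v hv => by rw [hxU v hv] :
            ∀ v ∈ U, transmission G v * (x v * x v) = transmission G v * (α*α)),
          ← Finset.sum_mul]
      · rw [Finset.sum_congr rfl (fun v hv => by rw [hxC v hv] :
            ∀ v ∈ Uᶜ, transmission G v * (x v * x v) = transmission G v * (β*β)),
          ← Finset.sum_mul]
    have edist : x ⬝ᵥ (distMatrix G *ᵥ x)
        = T1*(α*α) + T2*(α*β) + (T3*(β*α) + T4*(β*β)) := by
      have h0 : x ⬝ᵥ (distMatrix G *ᵥ x)
          = ∑ v, ∑ u, (G.dist v u : ℝ) * (x v * x u) := by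
        simp only [dotProduct, mulVec, distMatrix, Matrix.of_apply, Finset.mul_sum]
        exact Finset.sum_congr rfl fun v _ => Finset.sum_congr rfl fun u _ => by ring
      have hin : ∀ (v : V) (γ : ℝ), x v = γ →
          ∑ u, (G.dist v u:ℝ) * (x v * x u)
            = (∑ u ∈ U, (G.dist v u:ℝ))*(γ*α) + (∑ u ∈ Uᶜ, (G.dist v u:ℝ))*(γ*β) := by
        intro v γ hγ
        rw [← Finset.sum_add_sum_compl U, Finset.sum_mul, Finset.sum_mul]
        congr 1
        · exact Finset.sum_congr rfl fun u hu => by rw [hγ, hxU u hu]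
        · exact Finset.sum_congr rfl fun u hu => by rw [hγ, hxC u hu]
      rw [h0, ← Finset.sum_add_sum_compl U]
      congr 1
      · rw [Finset.sum_congr rfl (fun v hv => hin v α (hxU v hv)),
          Finset.sum_add_distrib, ← Finset.sum_mul, ← Finset.sum_mul]
      · rw [Finset.sum_congr rfl (fun v hv => hin v β (hxC v hv)),
          Finset.sum_add_distrib, ← Finset.sum_mul, ← Finset.sum_mul]
    have hform : x ⬝ᵥ (distSLMatrix G *ᵥ x)
        = sU*(α*α) + sC*(β*β) + (T1*(α*α) + T2*(α*β) + (T3*(β*α) + T4*(β*β))) := by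
      rw [distSLMatrix, add_mulVec, dotProduct_add, ediag, edist]
    have hray := rayleigh_aux (distSLMatrix_isHermitian G) x
    rw [hform, hxx] at hray
    have hT4' : T4 = 2*W - 2*s + (ω:ℝ)*((ω:ℝ)-1) := by
      have h2 : T2 = s - (ω:ℝ)*((ω:ℝ)-1) := by
        rw [← hT1]; rw [hsU] at hsplitU; linarith
      rw [hT3, h2] at hsplitC
      rw [hsU] at htot
      linarith
    have h2 : T2 = s - (ω:ℝ)*((ω:ℝ)-1) := by
      rw [← hT1]; rw [hsU] at hsplitU; linarith
    have hsC' : sC = 2*W - s := by rw [hsU] at htot; linarith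
    rw [hsU, hsC', hT1, h2, hT3, h2, hT4'] at hray
    calc (s + (ω:ℝ)*((ω:ℝ)-1))*(α*α) + 2*(s-(ω:ℝ)*((ω:ℝ)-1))*(α*β)
          + (4*W-3*s+(ω:ℝ)*((ω:ℝ)-1))*(β*β)
        = s*(α*α) + (2*W-s)*(β*β)
          + (((ω:ℝ)*((ω:ℝ)-1))*(α*α) + (s-(ω:ℝ)*((ω:ℝ)-1))*(α*β)
            + ((s-(ω:ℝ)*((ω:ℝ)-1))*(β*α) + (2*W-2*s+(ω:ℝ)*((ω:ℝ)-1))*(β*β))) := by ring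
      _ ≤ q * ((ω:ℝ)*(α*α) + ((n:ℝ)-(ω:ℝ))*(β*β)) := hray
  -- now extract the quadratic-root bound
  set p : ℝ := (ω:ℝ)*((ω:ℝ)-1) with hpdef
  set A' : ℝ := q*(ω:ℝ) - (s+p) with hA'def
  set C' : ℝ := q*((n:ℝ)-(ω:ℝ)) - (4*W-3*s+p) with hC'def
  have hA : 0 ≤ A' := by have h := hRay 1 0; rw [hA'def]; linarith only [h]
  have hC : 0 ≤ C' := by have h := hRay 0 1; rw [hC'def]; linarith only [h]
  have hquad : ∀ t : ℝ, 0 ≤ A' * (t*t) + (-2*(s-p))*t + C' := by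
    intro t
    have h := hRay t 1
    rw [hA'def, hC'def]
    linarith only [h]
  have hdisc := discrim_le_zero hquad
  rw [discrim] at hdisc
  have hACB : (s-p)*(s-p) ≤ A'*C' := by nlinarith only [hdisc]
  have hc : 0 < 2*((n:ℝ)-(ω:ℝ))*(ω:ℝ) := by positivity
  rw [div_le_iff₀ hc]
  have hkey : q*(2*((n:ℝ)-(ω:ℝ))*(ω:ℝ)) + a = (ω:ℝ)*C' + ((n:ℝ)-(ω:ℝ))*A' := by
    rw [ha, hA'def, hC'def, hpdef]; ring
  have h1 : 0 ≤ q*(2*((n:ℝ)-(ω:ℝ))*(ω:ℝ)) + a := by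
    rw [hkey]
    have := mul_nonneg (le_of_lt hωpos) hC
    have := mul_nonneg (le_of_lt hnω) hA
    linarith
  have hid : (q*(2*((n:ℝ)-(ω:ℝ))*(ω:ℝ)) + a)^2 - (a^2 - 4*b*((n:ℝ)-(ω:ℝ))*(ω:ℝ))
      = 4*(((n:ℝ)-(ω:ℝ))*(ω:ℝ))*(A'*C' - (s-p)*(s-p)) := by
    rw [ha, hb, hA'def, hC'def, hpdef]; ring
  have h2 : a^2 - 4*b*((n:ℝ)-(ω:ℝ))*(ω:ℝ) ≤ (q*(2*((n:ℝ)-(ω:ℝ))*(ω:ℝ)) + a)^2 := by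
    have hprod : 0 ≤ 4*(((n:ℝ)-(ω:ℝ))*(ω:ℝ))*(A'*C' - (s-p)*(s-p)) := by
      apply mul_nonneg
      · positivity
      · linarith
    linarith [hid, hprod]
  have hsq : Real.sqrt (a^2 - 4*b*((n:ℝ)-(ω:ℝ))*(ω:ℝ))
      ≤ q*(2*((n:ℝ)-(ω:ℝ))*(ω:ℝ)) + a := by
    calc Real.sqrt (a^2 - 4*b*((n:ℝ)-(ω:ℝ))*(ω:ℝ))
        ≤ Real.sqrt ((q*(2*((n:ℝ)-(ω:ℝ))*(ω:ℝ)) + a)^2) := Real.sqrt_le_sqrt h2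
      _ = q*(2*((n:ℝ)-(ω:ℝ))*(ω:ℝ)) + a := by
          rw [Real.sqrt_sq h1]
  linarith [hsq]
end
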